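/- Let A be a Banach algebra over ℝ and x, Δ ∈ A. Then the function t ↦ exp(−x) * exp(x + t•Δ) from ℝ to A is differentiable at t = 0, with derivative Σ_{n=0}^{∞} (1/(n+1)!) • (−ad x)^n(Δ) (a convergent series in A). (This is the derivative-of-the-exponential formula e^{−X} e^{X+ΔX} − 1 ≈ ((1 − e^{−ad_X})/ad_X) ΔX, equations (1.44)–(1.45) and (6.16*3) of the paper, used to compute the invariant measure on the coadjoint orbit.) -/

import Mathlib

open Finset

section Aux
variable {A : Type*} [NormedRing A] [NormedAlgebra ℝ A]

lemma hasDerivAt_pow_aff (x Δ : A) (n : ℕ) (t : ℝ) :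
    HasDerivAt (fun s : ℝ => (x + s • Δ) ^ n)
      (∑ k ∈ range n, (x + t • Δ) ^ k * Δ * (x + t • Δ) ^ (n - 1 - k)) t := by
  induction n with
  | zero => simpa using hasDerivAt_const t (1 : A)
  | succ n ih =>
    have hy : HasDerivAt (fun s : ℝ => x + s • Δ) Δ t := by
      simpa using (HasDerivAt.const_add x (((hasDerivAt_id t).smul_const Δ)))
    have h : HasDerivAt (fun s : ℝ => (x + s • Δ) * (x + s • Δ) ^ n) _ t := hy.mul ih
    have hfun : (fun s : ℝ => (x + s • Δ) * (x + s • Δ) ^ n)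
        = fun s : ℝ => (x + s • Δ) ^ (n + 1) := by
      funext s; rw [← pow_succ']
    rw [hfun] at h
    convert h using 1
    rw [Nat.add_sub_cancel, Finset.sum_range_succ']
    rw [Finset.mul_sum]
    simp only [pow_zero, one_mul, Nat.sub_zero]
    rw [add_comm]
    congr 1
    apply Finset.sum_congr rfl
    intro k hk
    rw [Finset.mem_range] at hk
    have h1 : n - (k + 1) = n - 1 - k := by omega
    rw [h1, ← mul_assoc, ← mul_assoc, ← pow_succ']

lemma ad_iter (x Δ : A) (n : ℕ) :
    (fun z => z * x - x * z)^[n] Δ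
      = ∑ k ∈ range (n + 1), ((-1 : ℝ) ^ k * ((n.choose k) : ℝ)) • (x ^ k * Δ * x ^ (n - k)) := by
  induction n with
  | zero => simp
  | succ n ih =>
    rw [Function.iterate_succ_apply', ih]
    have hmul : (∑ k ∈ range (n + 1), ((-1 : ℝ) ^ k * ((n.choose k) : ℝ)) • (x ^ k * Δ * x ^ (n - k))) * x
        = ∑ k ∈ range (n + 1), ((-1 : ℝ) ^ k * ((n.choose k) : ℝ)) • (x ^ k * Δ * x ^ (n + 1 - k)) := by
      rw [Finset.sum_mul]
      apply Finset.sum_congr rfl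
      intro k hk
      rw [Finset.mem_range] at hk
      have h1 : n + 1 - k = (n - k) + 1 := by omega
      rw [smul_mul_assoc, mul_assoc, ← pow_succ, h1]
    have hmul2 : x * (∑ k ∈ range (n + 1), ((-1 : ℝ) ^ k * ((n.choose k) : ℝ)) • (x ^ k * Δ * x ^ (n - k)))
        = ∑ k ∈ range (n + 1), ((-1 : ℝ) ^ k * ((n.choose k) : ℝ)) • (x ^ (k + 1) * Δ * x ^ (n + 1 - (k + 1))) := by
      rw [Finset.mul_sum]
      apply Finset.sum_congr rfl
      intro k hk
      rw [mul_smul_comm]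
      congr 1
      rw [Nat.succ_sub_succ, ← mul_assoc, ← mul_assoc, ← pow_succ']
    rw [hmul, hmul2]
    have hext : (∑ k ∈ range (n + 1), ((-1 : ℝ) ^ k * ((n.choose k) : ℝ)) • (x ^ k * Δ * x ^ (n + 1 - k)))
        = ∑ k ∈ range (n + 2), ((-1 : ℝ) ^ k * ((n.choose k) : ℝ)) • (x ^ k * Δ * x ^ (n + 1 - k)) := by
      rw [Finset.sum_range_succ (n := n + 1)]
      simp [Nat.choose_succ_self]
    rw [hext, Finset.sum_range_succ' _ (n + 1),
      Finset.sum_range_succ' (fun k => ((-1 : ℝ) ^ k * (((n+1).choose k) : ℝ)) • (x ^ k * Δ * x ^ (n + 1 - k))) (n + 1)]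
    have h3 : (∑ k ∈ range (n + 1), ((-1 : ℝ) ^ (k + 1) * ((n.choose (k + 1)) : ℝ)) • (x ^ (k + 1) * Δ * x ^ (n + 1 - (k + 1))))
        - ∑ k ∈ range (n + 1), ((-1 : ℝ) ^ k * ((n.choose k) : ℝ)) • (x ^ (k + 1) * Δ * x ^ (n + 1 - (k + 1)))
        = ∑ k ∈ range (n + 1), ((-1 : ℝ) ^ (k + 1) * (((n + 1).choose (k + 1)) : ℝ)) • (x ^ (k + 1) * Δ * x ^ (n + 1 - (k + 1))) := by
      rw [← Finset.sum_sub_distrib]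
      apply Finset.sum_congr rfl
      intro k hk
      rw [← sub_smul]
      congr 1
      rw [Nat.choose_succ_succ]
      push_cast
      ring
    rw [← h3]
    simp only [Nat.choose_zero_right]
    abel
end Aux

lemma alt_sum (N a : ℕ) :
    ∑ m ∈ range (a + 1), (-1 : ℝ) ^ m * (((N + 1).choose m) : ℝ)
      = (-1 : ℝ) ^ a * ((N.choose a) : ℝ) := by
  induction a with
  | zero => simp
  | succ a ih =>
    rw [Finset.sum_range_succ, ih, Nat.choose_succ_succ]
    push_cast
    ring

section Aux2
variable {A : Type*} [NormedRing A] [NormedAlgebra ℝ A]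

lemma coef_sum (N a : ℕ) (ha : a < N) :
    ∑ m ∈ range (a + 1), ((-1 : ℝ) ^ m * ((m.factorial : ℝ))⁻¹ * (((N - m).factorial : ℝ))⁻¹)
      = ((N.factorial : ℝ))⁻¹ * ((-1 : ℝ) ^ a * (((N - 1).choose a) : ℝ)) := by
  have h1 : ∀ m ∈ range (a + 1),
      ((-1 : ℝ) ^ m * ((m.factorial : ℝ))⁻¹ * (((N - m).factorial : ℝ))⁻¹)
        = ((N.factorial : ℝ))⁻¹ * ((-1 : ℝ) ^ m * ((N.choose m) : ℝ)) := by
    intro m hm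
    rw [Finset.mem_range] at hm
    have hmN : m ≤ N := by omega
    have hcast : ((N.choose m : ℝ)) * (m.factorial : ℝ) * ((N - m).factorial : ℝ) = (N.factorial : ℝ) := by
      exact_mod_cast congrArg (Nat.cast : ℕ → ℝ) (Nat.choose_mul_factorial_mul_factorial hmN)
    have hm0 : (m.factorial : ℝ) ≠ 0 := Nat.cast_ne_zero.mpr m.factorial_ne_zero
    have hm1 : ((N - m).factorial : ℝ) ≠ 0 := Nat.cast_ne_zero.mpr (N - m).factorial_ne_zero
    have hc : ((N.choose m) : ℝ) ≠ 0 := Nat.cast_ne_zero.mpr (Nat.choose_pos hmN).ne'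
    rw [← hcast]
    field_simp
  rw [Finset.sum_congr rfl h1, ← Finset.mul_sum]
  congr 1
  have hN : N - 1 + 1 = N := by omega
  have h2 := alt_sum (N - 1) a
  rw [hN] at h2
  exact h2

lemma cauchy_term (x Δ : A) (N : ℕ) :
    ∑ kl ∈ antidiagonal N,
        (((kl.1.factorial : ℝ))⁻¹ • (-x) ^ kl.1) *
          (((kl.2.factorial : ℝ))⁻¹ • ∑ k ∈ range kl.2, x ^ k * Δ * x ^ (kl.2 - 1 - k))
      = ((N.factorial : ℝ))⁻¹ •
          ∑ k ∈ range N, ((-1 : ℝ) ^ k * (((N - 1).choose k) : ℝ)) • (x ^ k * Δ * x ^ (N - 1 - k)) := by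
  rw [Finset.Nat.sum_antidiagonal_eq_sum_range_succ_mk]
  have hterm : ∀ m ∈ range (N + 1),
      (((m.factorial : ℝ))⁻¹ • (-x) ^ m) *
          ((((N - m).factorial : ℝ))⁻¹ • ∑ k ∈ range (N - m), x ^ k * Δ * x ^ (N - m - 1 - k))
        = ∑ k ∈ range (N - m),
            ((-1 : ℝ) ^ m * ((m.factorial : ℝ))⁻¹ * (((N - m).factorial : ℝ))⁻¹) •
              (x ^ (m + k) * Δ * x ^ (N - 1 - (m + k))) := by
    intro m hm
    rw [Finset.mem_range] at hm
    rw [← neg_one_smul ℝ x, smul_pow, smul_smul, smul_mul_assoc, mul_smul_comm, smul_smul,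
      Finset.mul_sum, Finset.smul_sum]
    apply Finset.sum_congr rfl
    intro k hk
    rw [Finset.mem_range] at hk
    have hsub : N - m - 1 - k = N - 1 - (m + k) := by omega
    have hx : x ^ m * (x ^ k * Δ * x ^ (N - m - 1 - k)) = x ^ (m + k) * Δ * x ^ (N - 1 - (m + k)) := by
      rw [hsub, ← mul_assoc, ← mul_assoc, ← pow_add]
    rw [hx]
    congr 1
    ring
  rw [Finset.sum_congr rfl hterm]
  -- RHS transformation
  rw [Finset.smul_sum]
  have hrhs : ∀ a ∈ range N,
      ((N.factorial : ℝ))⁻¹ • (((-1 : ℝ) ^ a * (((N - 1).choose a) : ℝ)) • (x ^ a * Δ * x ^ (N - 1 - a)))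
        = ∑ m ∈ range (a + 1),
            ((-1 : ℝ) ^ m * ((m.factorial : ℝ))⁻¹ * (((N - m).factorial : ℝ))⁻¹) •
              (x ^ a * Δ * x ^ (N - 1 - a)) := by
    intro a haa
    rw [Finset.mem_range] at haa
    rw [smul_smul, ← coef_sum N a haa, Finset.sum_smul]
  rw [Finset.sum_congr rfl hrhs]
  rw [Finset.sum_sigma' (range (N + 1)) (fun m => range (N - m))
      (fun m k => ((-1 : ℝ) ^ m * ((m.factorial : ℝ))⁻¹ * (((N - m).factorial : ℝ))⁻¹) •
        (x ^ (m + k) * Δ * x ^ (N - 1 - (m + k)))),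
    Finset.sum_sigma' (range N) (fun a => range (a + 1))
      (fun a m => ((-1 : ℝ) ^ m * ((m.factorial : ℝ))⁻¹ * (((N - m).factorial : ℝ))⁻¹) •
        (x ^ a * Δ * x ^ (N - 1 - a)))]
  refine Finset.sum_nbij' (fun p => ⟨p.1 + p.2, p.1⟩) (fun q => ⟨q.2, q.1 - q.2⟩) ?_ ?_ ?_ ?_ ?_
  · rintro ⟨m, k⟩ hp
    simp only [Finset.mem_sigma, Finset.mem_range] at hp ⊢
    omega
  · rintro ⟨a, m⟩ hq
    simp only [Finset.mem_sigma, Finset.mem_range] at hq ⊢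
    omega
  · rintro ⟨m, k⟩ hp
    simp only [Finset.mem_sigma, Finset.mem_range] at hp
    show (⟨m, m + k - m⟩ : Σ _ : ℕ, ℕ) = ⟨m, k⟩
    have h : m + k - m = k := by omega
    rw [h]
  · rintro ⟨a, m⟩ hq
    simp only [Finset.mem_sigma, Finset.mem_range] at hq
    show (⟨m + (a - m), m⟩ : Σ _ : ℕ, ℕ) = ⟨a, m⟩
    have h : m + (a - m) = a := by omega
    rw [h]
  · rintro ⟨m, k⟩ hp
    rfl
end Aux2

section Aux3
variable {A : Type*} [NormedRing A] [NormedAlgebra ℝ A]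

lemma norm_pow_le_one_add (y : A) (k : ℕ) : ‖y ^ k‖ ≤ (1 + ‖(1 : A)‖) * ‖y‖ ^ k := by
  cases k with
  | zero => simpa using by linarith [norm_nonneg (1 : A)]
  | succ k =>
    calc ‖y ^ (k + 1)‖ ≤ ‖y‖ ^ (k + 1) := norm_pow_le' y k.succ_pos
      _ ≤ (1 + ‖(1 : A)‖) * ‖y‖ ^ (k + 1) := by
          nlinarith [pow_nonneg (norm_nonneg y) (k + 1), norm_nonneg (1 : A)]

lemma norm_P_le (Δ y : A) {M : ℝ} (hy : ‖y‖ ≤ M) (n : ℕ) :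
    ‖∑ k ∈ range (n + 1), y ^ k * Δ * y ^ (n - k)‖
      ≤ (n + 1 : ℝ) * ((1 + ‖(1 : A)‖) ^ 2 * ‖Δ‖ * M ^ n) := by
  have hM : (0 : ℝ) ≤ M := le_trans (norm_nonneg y) hy
  have hbound : ∀ k ∈ range (n + 1),
      ‖y ^ k * Δ * y ^ (n - k)‖ ≤ (1 + ‖(1 : A)‖) ^ 2 * ‖Δ‖ * M ^ n := by
    intro k hk
    rw [Finset.mem_range] at hk
    have h1 : ‖y ^ k * Δ * y ^ (n - k)‖ ≤ ((1 + ‖(1 : A)‖) * ‖y‖ ^ k) * ‖Δ‖ * ((1 + ‖(1 : A)‖) * ‖y‖ ^ (n - k)) := by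
      calc ‖y ^ k * Δ * y ^ (n - k)‖ ≤ ‖y ^ k * Δ‖ * ‖y ^ (n - k)‖ := norm_mul_le _ _
        _ ≤ (‖y ^ k‖ * ‖Δ‖) * ‖y ^ (n - k)‖ := by
            gcongr
            exact norm_mul_le _ _
        _ ≤ ((1 + ‖(1 : A)‖) * ‖y‖ ^ k) * ‖Δ‖ * ((1 + ‖(1 : A)‖) * ‖y‖ ^ (n - k)) := by
            gcongr
            · exact norm_pow_le_one_add y k
            · exact norm_pow_le_one_add y (n - k)
    have h2 : ((1 + ‖(1 : A)‖) * ‖y‖ ^ k) * ‖Δ‖ * ((1 + ‖(1 : A)‖) * ‖y‖ ^ (n - k))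
        = (1 + ‖(1 : A)‖) ^ 2 * ‖Δ‖ * (‖y‖ ^ k * ‖y‖ ^ (n - k)) := by ring
    have h3 : ‖y‖ ^ k * ‖y‖ ^ (n - k) = ‖y‖ ^ n := by
      rw [← pow_add]
      congr 1
      omega
    have h4 : ‖y‖ ^ n ≤ M ^ n := pow_le_pow_left₀ (norm_nonneg y) hy n
    have h5 : (0 : ℝ) ≤ (1 + ‖(1 : A)‖) ^ 2 * ‖Δ‖ := by positivity
    calc ‖y ^ k * Δ * y ^ (n - k)‖ ≤ (1 + ‖(1 : A)‖) ^ 2 * ‖Δ‖ * ‖y‖ ^ n := by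
          rw [← h3]; linarith [h1, h2.le]
      _ ≤ (1 + ‖(1 : A)‖) ^ 2 * ‖Δ‖ * M ^ n := by
          exact mul_le_mul_of_nonneg_left h4 h5
  calc ‖∑ k ∈ range (n + 1), y ^ k * Δ * y ^ (n - k)‖
      ≤ ∑ k ∈ range (n + 1), ‖y ^ k * Δ * y ^ (n - k)‖ := norm_sum_le _ _
    _ ≤ ∑ _k ∈ range (n + 1), (1 + ‖(1 : A)‖) ^ 2 * ‖Δ‖ * M ^ n := Finset.sum_le_sum hbound
    _ = (n + 1 : ℝ) * ((1 + ‖(1 : A)‖) ^ 2 * ‖Δ‖ * M ^ n) := by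
        rw [Finset.sum_const, Finset.card_range, nsmul_eq_mul]
        push_cast
        ring

lemma fact_succ_inv (n : ℕ) :
    (((n + 1).factorial : ℝ))⁻¹ * ((n : ℝ) + 1) = ((n.factorial : ℝ))⁻¹ := by
  rw [Nat.factorial_succ]
  push_cast
  rw [mul_inv]
  have h1 : ((n : ℝ) + 1) ≠ 0 := by positivity
  field_simp

end Aux3

/-- In a Banach algebra `A` over `ℝ`, the map `t ↦ exp(-x) * exp(x + t•Δ)` is differentiable
at `t = 0` with derivative `∑_{n≥0} (1/(n+1)!) • (-ad x)^n Δ`, where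
`(-ad x)(z) = z*x - x*z`. -/
theorem hasDerivAt_exp_neg_mul_exp_add
    {A : Type*} [NormedRing A] [NormedAlgebra ℝ A] [CompleteSpace A] (x Δ : A) :
    HasDerivAt (fun t : ℝ => NormedSpace.exp (-x) * NormedSpace.exp (x + t • Δ))
      (∑' n : ℕ, ((Nat.factorial (n + 1) : ℝ))⁻¹ • ((fun z => z * x - x * z)^[n] Δ))
      0 := by
  classical
  set E : A := NormedSpace.exp (-x) with hE
  set K : ℝ := (1 + ‖(1 : A)‖) ^ 2 with hK
  set M : ℝ := ‖x‖ + ‖Δ‖ with hM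
  set g : ℕ → ℝ → A := fun n t => ((n.factorial : ℝ))⁻¹ • (E * (x + t • Δ) ^ n) with hg
  set g' : ℕ → ℝ → A := fun n t =>
    ((n.factorial : ℝ))⁻¹ •
      (E * ∑ k ∈ range n, (x + t • Δ) ^ k * Δ * (x + t • Δ) ^ (n - 1 - k)) with hg'
  set u : ℕ → ℝ := fun n =>
    if n = 0 then 0 else ‖E‖ * (K * ‖Δ‖) * (M ^ (n - 1) / (n - 1).factorial) with hu
  have hM0 : (0 : ℝ) ≤ M := by positivity
  have hu_s : Summable u := by
    rw [← summable_nat_add_iff 1]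
    have h : (fun n => u (n + 1)) = fun n => ‖E‖ * (K * ‖Δ‖) * (M ^ n / n.factorial) := by
      funext n; simp [hu]
    rw [h]
    exact (Real.summable_pow_div_factorial M).mul_left _
  have hgderiv : ∀ (n : ℕ), ∀ t ∈ Metric.ball (0 : ℝ) 1, HasDerivAt (g n) (g' n t) t := by
    intro n t _
    exact ((hasDerivAt_pow_aff x Δ n t).const_mul E).const_smul (((n.factorial : ℝ))⁻¹)
  have hgbound : ∀ (n : ℕ), ∀ t ∈ Metric.ball (0 : ℝ) 1, ‖g' n t‖ ≤ u n := by
    intro n t ht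
    cases n with
    | zero => simp [hg', hu]
    | succ n =>
      have hyt : ‖x + t • Δ‖ ≤ M := by
        have ht1 : |t| ≤ 1 := by
          rw [Metric.mem_ball, Real.dist_eq, sub_zero] at ht
          exact ht.le
        calc ‖x + t • Δ‖ ≤ ‖x‖ + ‖t • Δ‖ := norm_add_le _ _
          _ = ‖x‖ + |t| * ‖Δ‖ := by rw [norm_smul, Real.norm_eq_abs]
          _ ≤ ‖x‖ + 1 * ‖Δ‖ := by
              have := mul_le_mul_of_nonneg_right ht1 (norm_nonneg Δ)
              linarith
          _ = M := by rw [one_mul]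
      have hP := norm_P_le Δ (x + t • Δ) hyt n
      have e1 : g' (n + 1) t = (((n + 1).factorial : ℝ))⁻¹ •
          (E * ∑ k ∈ range (n + 1), (x + t • Δ) ^ k * Δ * (x + t • Δ) ^ (n - k)) := by
        simp only [hg', Nat.add_sub_cancel]
      have hinv : (0 : ℝ) ≤ (((n + 1).factorial : ℝ))⁻¹ := by positivity
      have e2 : u (n + 1) = ‖E‖ * (K * ‖Δ‖) * (M ^ n / n.factorial) := by simp [hu]
      rw [e1, e2]
      calc ‖(((n + 1).factorial : ℝ))⁻¹ •
          (E * ∑ k ∈ range (n + 1), (x + t • Δ) ^ k * Δ * (x + t • Δ) ^ (n - k))‖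
          = (((n + 1).factorial : ℝ))⁻¹ *
            ‖E * ∑ k ∈ range (n + 1), (x + t • Δ) ^ k * Δ * (x + t • Δ) ^ (n - k)‖ := by
            rw [norm_smul, Real.norm_eq_abs, abs_of_nonneg hinv]
        _ ≤ (((n + 1).factorial : ℝ))⁻¹ * (‖E‖ * ((n + 1 : ℝ) * (K * ‖Δ‖ * M ^ n))) := by
            refine mul_le_mul_of_nonneg_left ?_ hinv
            exact (norm_mul_le _ _).trans (mul_le_mul_of_nonneg_left hP (norm_nonneg E))
        _ = ‖E‖ * (K * ‖Δ‖) * (M ^ n / n.factorial) := by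
            rw [div_eq_mul_inv, ← fact_succ_inv n]
            ring
  have hg0 : Summable fun n => g n 0 := by
    apply Summable.of_norm
    refine Summable.of_nonneg_of_le (fun n => norm_nonneg _) (fun n => ?_)
      ((Real.summable_pow_div_factorial ‖x‖).mul_left (‖E‖ * (1 + ‖(1 : A)‖)))
    have e1 : g n 0 = ((n.factorial : ℝ))⁻¹ • (E * x ^ n) := by simp [hg]
    have hinv : (0 : ℝ) ≤ ((n.factorial : ℝ))⁻¹ := by positivity
    rw [e1, norm_smul, Real.norm_eq_abs, abs_of_nonneg hinv]
    calc ((n.factorial : ℝ))⁻¹ * ‖E * x ^ n‖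
        ≤ ((n.factorial : ℝ))⁻¹ * (‖E‖ * ((1 + ‖(1 : A)‖) * ‖x‖ ^ n)) := by
          refine mul_le_mul_of_nonneg_left ?_ hinv
          exact (norm_mul_le _ _).trans
            (mul_le_mul_of_nonneg_left (norm_pow_le_one_add x n) (norm_nonneg E))
      _ = ‖E‖ * (1 + ‖(1 : A)‖) * (‖x‖ ^ n / n.factorial) := by
          rw [div_eq_mul_inv]; ring
  have key : HasDerivAt (fun z : ℝ => ∑' n, g n z) (∑' n, g' n 0) 0 :=
    hasDerivAt_tsum_of_isPreconnected hu_s Metric.isOpen_ball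
      (convex_ball (0 : ℝ) 1).isPreconnected hgderiv hgbound
      (Metric.mem_ball_self one_pos) hg0 (Metric.mem_ball_self one_pos)
  have hfunc : (fun z : ℝ => ∑' n, g n z)
      = fun t : ℝ => E * NormedSpace.exp (x + t • Δ) := by
    funext t
    have h1 : ∀ n : ℕ, g n t = E * (((n.factorial : ℝ))⁻¹ • (x + t • Δ) ^ n) := fun n =>
      (mul_smul_comm _ _ _).symm
    rw [tsum_congr h1,
      Summable.tsum_mul_left E (NormedSpace.expSeries_summable' (𝕂 := ℝ) (x + t • Δ)),
      NormedSpace.exp_eq_tsum (𝕂 := ℝ)]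
  -- summability of the two factor series
  have hFnorm : Summable fun m : ℕ => ‖((m.factorial : ℝ))⁻¹ • (-x) ^ m‖ :=
    NormedSpace.norm_expSeries_summable' (𝕂 := ℝ) (-x)
  have hGnorm : Summable fun n : ℕ =>
      ‖((n.factorial : ℝ))⁻¹ • ∑ k ∈ range n, x ^ k * Δ * x ^ (n - 1 - k)‖ := by
    refine Summable.of_nonneg_of_le (f := fun n : ℕ =>
        if n = 0 then 0 else K * ‖Δ‖ * (‖x‖ ^ (n - 1) / (n - 1).factorial))
      (fun n => norm_nonneg _) (fun n => ?_) ?_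
    · cases n with
      | zero => simp
      | succ n =>
        have hP := norm_P_le Δ x (le_refl ‖x‖) n
        have hinv : (0 : ℝ) ≤ (((n + 1).factorial : ℝ))⁻¹ := by positivity
        simp only [Nat.add_sub_cancel, Nat.succ_ne_zero, if_false]
        rw [norm_smul, Real.norm_eq_abs, abs_of_nonneg hinv]
        calc (((n + 1).factorial : ℝ))⁻¹ * ‖∑ k ∈ range (n + 1), x ^ k * Δ * x ^ (n - k)‖
            ≤ (((n + 1).factorial : ℝ))⁻¹ * ((n + 1 : ℝ) * (K * ‖Δ‖ * ‖x‖ ^ n)) := by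
              exact mul_le_mul_of_nonneg_left hP hinv
          _ = K * ‖Δ‖ * (‖x‖ ^ n / n.factorial) := by
              rw [div_eq_mul_inv, ← fact_succ_inv n]; ring
    · rw [← summable_nat_add_iff 1]
      have h : (fun n : ℕ => if n + 1 = 0 then (0 : ℝ)
          else K * ‖Δ‖ * (‖x‖ ^ (n + 1 - 1) / (n + 1 - 1).factorial))
          = fun n => K * ‖Δ‖ * (‖x‖ ^ n / n.factorial) := by
        funext n; simp
      rw [h]
      exact (Real.summable_pow_div_factorial ‖x‖).mul_left _
  have hval : (∑' n, g' n 0)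
      = ∑' n : ℕ, ((Nat.factorial (n + 1) : ℝ))⁻¹ • ((fun z => z * x - x * z)^[n] Δ) := by
    have h0 : ∀ n : ℕ, g' n 0
        = E * (((n.factorial : ℝ))⁻¹ • ∑ k ∈ range n, x ^ k * Δ * x ^ (n - 1 - k)) := by
      intro n
      simp only [hg', zero_smul, add_zero]
      rw [mul_smul_comm]
    have hEe : E = ∑' m : ℕ, ((m.factorial : ℝ))⁻¹ • (-x) ^ m := by
      rw [hE, NormedSpace.exp_eq_tsum (𝕂 := ℝ)]
    rw [tsum_congr h0, Summable.tsum_mul_left E hGnorm.of_norm, hEe,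
      tsum_mul_tsum_eq_tsum_sum_antidiagonal_of_summable_norm hFnorm hGnorm,
      tsum_congr (fun N => cauchy_term x Δ N)]
    have hT : Summable fun N : ℕ => ((N.factorial : ℝ))⁻¹ •
        ∑ k ∈ range N, ((-1 : ℝ) ^ k * (((N - 1).choose k) : ℝ)) • (x ^ k * Δ * x ^ (N - 1 - k)) := by
      have h := (summable_norm_sum_mul_antidiagonal_of_summable_norm hFnorm hGnorm).of_norm
      exact (summable_congr fun N => (cauchy_term x Δ N)).mp h
    rw [Summable.tsum_eq_zero_add hT]
    simp only [range_zero, sum_empty, smul_zero, zero_add]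
    apply tsum_congr
    intro n
    rw [ad_iter x Δ n]
    simp only [Nat.add_sub_cancel]
  rw [hfunc] at key
  rw [hval] at key
  exact key
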